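/- Let m = n = p and suppose μ := min_{i,j,k} e_{ijk} > 0 and M := max_{i,j,k} e_{ijk}, L := ∑_{i,j,k} l_{ijk} > 0. Then for every point of the invariant box U and all i, j, |∂φ_i/∂y_j| ≤ (l^x_i/l^x_1) · M(M² − μ²) l^y_1 / (μ³ L). -/

import Mathlib

private lemma rating_aux (μ M L ly1 Y Z : ℝ) (hμ : 0 < μ) (hM : 0 < M) (hL : 0 < L)
    (hly1 : 0 < ly1) (hY : 0 < Y) (hZ : 0 < Z) (hMμ : 0 ≤ M ^ 2 - μ ^ 2)
    (hYlb : μ * L ≤ ly1 * M * Y) :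
    (M ^ 2 - μ ^ 2) * (Y * Z ^ 2) ≤ M * (M ^ 2 - μ ^ 2) * ly1 / (μ ^ 3 * L) * (μ * (Y * Z)) ^ 2 := by
  rw [div_mul_eq_mul_div, le_div_iff₀ (mul_pos (pow_pos hμ 3) hL)]
  have hfac : (0:ℝ) ≤ (M ^ 2 - μ ^ 2) * (μ ^ 2 * (Y * Z ^ 2)) :=
    mul_nonneg hMμ (mul_nonneg (pow_nonneg hμ.le 2)
      (mul_nonneg hY.le (pow_nonneg hZ.le 2)))
  nlinarith [mul_le_mul_of_nonneg_left hYlb hfac]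

theorem rating_map_simplified_derivative_bound (d : ℕ) (hd : 0 < d)
    (e : Fin d → Fin d → Fin d → ℝ) (l : Fin d → Fin d → Fin d → ℝ)
    (hl : ∀ i j k, 0 ≤ l i j k)
    (μ M : ℝ) (hμ : 0 < μ)
    (hμdef : μ = Finset.univ.inf'
      (Finset.univ_nonempty_iff.mpr ⟨(⟨0, hd⟩, ⟨0, hd⟩, ⟨0, hd⟩)⟩)
      (fun v : Fin d × Fin d × Fin d => e v.1 v.2.1 v.2.2))
    (hMdef : M = Finset.univ.sup'
      (Finset.univ_nonempty_iff.mpr ⟨(⟨0, hd⟩, ⟨0, hd⟩, ⟨0, hd⟩)⟩)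
      (fun v : Fin d × Fin d × Fin d => e v.1 v.2.1 v.2.2))
    (L : ℝ) (hLdef : L = ∑ i, ∑ j, ∑ k, l i j k) (hL : 0 < L)
    (lx : Fin d → ℝ) (ly : Fin d → ℝ)
    (hlxdef : ∀ i, lx i = ∑ j, ∑ k, l i j k)
    (hlydef : ∀ j, ly j = ∑ i, ∑ k, l i j k)
    (hlx1 : 0 < lx ⟨0, hd⟩) (hly1 : 0 < ly ⟨0, hd⟩)
    (y : Fin d → ℝ) (z : Fin d → ℝ)
    (hy : ∀ j', 0 < y j') (hz : ∀ k, 0 < z k)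
    (hybox : ∀ j', ly j' * μ / (ly ⟨0, hd⟩ * M) ≤ y j')
    (i : Fin d) (j : Fin d) :
    |deriv (fun t : ℝ => lx i / lx ⟨0, hd⟩ *
        ((∑ j', ∑ k, e ⟨0, hd⟩ j' k * Function.update y j t j' * z k) /
          (∑ j', ∑ k, e i j' k * Function.update y j t j' * z k))) (y j)|
      ≤ lx i / lx ⟨0, hd⟩ * (M * (M ^ 2 - μ ^ 2) * ly ⟨0, hd⟩ / (μ ^ 3 * L)) := by
  set i0 : Fin d := ⟨0, hd⟩ with hi0
  have hne : (Finset.univ : Finset (Fin d)).Nonempty := ⟨i0, Finset.mem_univ _⟩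
  have hμle : ∀ a b c, μ ≤ e a b c := fun a b c => by
    rw [hμdef]; exact Finset.inf'_le _ (Finset.mem_univ (a, b, c))
  have heM : ∀ a b c, e a b c ≤ M := fun a b c => by
    rw [hMdef]
    exact Finset.le_sup' (fun v : Fin d × Fin d × Fin d => e v.1 v.2.1 v.2.2)
      (Finset.mem_univ (a, b, c))
  have hM : 0 < M := lt_of_lt_of_le hμ (le_trans (hμle i0 i0 i0) (heM i0 i0 i0))
  have hMμ : 0 ≤ M ^ 2 - μ ^ 2 := by nlinarith [hμle i0 i0 i0, heM i0 i0 i0]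
  set A : Fin d → ℝ := fun a => ∑ k, e a j k * z k with hA
  set B : Fin d → ℝ := fun a =>
    ∑ j' ∈ Finset.univ.erase j, ∑ k, e a j' k * y j' * z k with hB
  set S : Fin d → ℝ := fun a => ∑ j', ∑ k, e a j' k * y j' * z k with hS
  have hNlin : ∀ (a : Fin d) (t : ℝ),
      (∑ j', ∑ k, e a j' k * Function.update y j t j' * z k) = A a * t + B a := by
    intro a t
    rw [← Finset.sum_erase_add _ _ (Finset.mem_univ j), add_comm]
    congr 1
    · simp only [hA, Function.update_self, Finset.sum_mul]
      exact Finset.sum_congr rfl fun k _ => by ring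
    · exact Finset.sum_congr rfl fun j' hj' => Finset.sum_congr rfl fun k _ => by
        rw [Function.update_of_ne (Finset.ne_of_mem_erase hj')]
  have hSval : ∀ a, A a * y j + B a = S a := by
    intro a
    rw [← hNlin a (y j), hS]
    have hupd : Function.update y j (y j) = y := Function.update_eq_self j y
    rw [hupd]
  have hSpos : ∀ a, 0 < S a := fun a =>
    Finset.sum_pos (fun j' _ => Finset.sum_pos (fun k _ =>
      mul_pos (mul_pos (lt_of_lt_of_le hμ (hμle a j' k)) (hy j')) (hz k))
      hne) hne
  set Y := ∑ j', y j' with hY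
  set Z := ∑ k, z k with hZ
  have hYpos : 0 < Y := Finset.sum_pos (fun _ _ => hy _) hne
  have hZpos : 0 < Z := Finset.sum_pos (fun _ _ => hz _) hne
  have hAub : ∀ a, A a ≤ M * Z := fun a => by
    rw [hZ, Finset.mul_sum]
    exact Finset.sum_le_sum fun k _ => mul_le_mul_of_nonneg_right (heM a j k) (hz k).le
  have hAlb : ∀ a, μ * Z ≤ A a := fun a => by
    rw [hZ, Finset.mul_sum]
    exact Finset.sum_le_sum fun k _ => mul_le_mul_of_nonneg_right (hμle a j k) (hz k).le
  have hApos : ∀ a, 0 < A a := fun a => lt_of_lt_of_le (mul_pos hμ hZpos) (hAlb a)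
  have hYZ : Y * Z = ∑ j', ∑ k, y j' * z k := Finset.sum_mul_sum _ _ _ _
  have hSub : ∀ a, S a ≤ M * (Y * Z) := fun a => by
    rw [hYZ, Finset.mul_sum]
    refine Finset.sum_le_sum fun j' _ => ?_
    rw [Finset.mul_sum]
    refine Finset.sum_le_sum fun k _ => ?_
    have h := mul_pos (hy j') (hz k)
    nlinarith [heM a j' k]
  have hSlb : ∀ a, μ * (Y * Z) ≤ S a := fun a => by
    rw [hYZ, Finset.mul_sum]
    refine Finset.sum_le_sum fun j' _ => ?_
    rw [Finset.mul_sum]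
    refine Finset.sum_le_sum fun k _ => ?_
    have h := mul_pos (hy j') (hz k)
    nlinarith [hμle a j' k]
  have hlysum : (∑ j', ly j') = L := by
    simp only [hlydef, hLdef]
    rw [Finset.sum_comm]
  have hden : 0 < ly i0 * M := mul_pos hly1 hM
  have hYlb : μ * L ≤ ly i0 * M * Y := by
    have hsum : (∑ j', ly j' * μ / (ly i0 * M)) ≤ Y :=
      Finset.sum_le_sum fun j' _ => hybox j'
    rw [← Finset.sum_div, ← Finset.sum_mul, hlysum, div_le_iff₀ hden] at hsum
    nlinarith [hsum]
  clear_value A B S Y Z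
  -- derivative computation
  have hDne : A i * y j + B i ≠ 0 := by rw [hSval i]; exact (hSpos i).ne'
  have hfun : (fun t : ℝ => lx i / lx i0 *
      ((∑ j', ∑ k, e i0 j' k * Function.update y j t j' * z k) /
        (∑ j', ∑ k, e i j' k * Function.update y j t j' * z k)))
      = fun t : ℝ => lx i / lx i0 * ((A i0 * t + B i0) / (A i * t + B i)) := by
    funext t; rw [hNlin, hNlin]
  have h1 : HasDerivAt (fun t : ℝ => A i0 * t + B i0) (A i0) (y j) := by
    simpa using ((hasDerivAt_id (y j)).const_mul (A i0)).add_const (B i0)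
  have h2 : HasDerivAt (fun t : ℝ => A i * t + B i) (A i) (y j) := by
    simpa using ((hasDerivAt_id (y j)).const_mul (A i)).add_const (B i)
  have h3 : HasDerivAt (fun t : ℝ => lx i / lx i0 * ((A i0 * t + B i0) / (A i * t + B i)))
      (lx i / lx i0 * ((A i0 * (A i * y j + B i) - (A i0 * y j + B i0) * A i) / (A i * y j + B i) ^ 2)) (y j) :=
    (h1.div h2 hDne).const_mul (lx i / lx i0)
  rw [hfun, h3.deriv, hSval i, hSval i0]
  -- now bound
  have hc : 0 ≤ lx i / lx i0 := by
    refine div_nonneg ?_ hlx1.le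
    rw [hlxdef]
    exact Finset.sum_nonneg fun _ _ => Finset.sum_nonneg fun _ _ => hl _ _ _
  rw [abs_mul, abs_of_nonneg hc]
  refine mul_le_mul_of_nonneg_left ?_ hc
  have hS2pos : (0:ℝ) < S i ^ 2 := pow_pos (hSpos i) 2
  rw [abs_div, abs_of_nonneg hS2pos.le, div_le_iff₀ hS2pos]
  have hMZ : (0:ℝ) ≤ M * Z := (mul_pos hM hZpos).le
  have hmuYZ : (0:ℝ) ≤ μ * (Y * Z) := (mul_pos hμ (mul_pos hYpos hZpos)).le
  have hMYZ : (0:ℝ) ≤ M * (Y * Z) := (mul_pos hM (mul_pos hYpos hZpos)).le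
  have hnum : |A i0 * S i - S i0 * A i| ≤ (M ^ 2 - μ ^ 2) * (Y * Z ^ 2) := by
    rw [abs_le]
    constructor
    · have hb1 : μ * Z * (μ * (Y * Z)) ≤ A i0 * S i :=
        mul_le_mul (hAlb i0) (hSlb i) hmuYZ (hApos i0).le
      have hb2 : S i0 * A i ≤ M * (Y * Z) * (M * Z) :=
        mul_le_mul (hSub i0) (hAub i) (hApos i).le hMYZ
      nlinarith [hb1, hb2]
    · have hb1 : A i0 * S i ≤ M * Z * (M * (Y * Z)) :=
        mul_le_mul (hAub i0) (hSub i) (hSpos i).le hMZ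
      have hb2 : μ * (Y * Z) * (μ * Z) ≤ S i0 * A i :=
        mul_le_mul (hSlb i0) (hAlb i) (mul_pos hμ hZpos).le (hSpos i0).le
      nlinarith [hb1, hb2]
  have hR : 0 ≤ M * (M ^ 2 - μ ^ 2) * ly i0 / (μ ^ 3 * L) :=
    div_nonneg (mul_nonneg (mul_nonneg hM.le hMμ) hly1.le)
      (mul_nonneg (pow_nonneg hμ.le 3) hL.le)
  have hSsq : (μ * (Y * Z)) ^ 2 ≤ S i ^ 2 := pow_le_pow_left₀ hmuYZ (hSlb i) 2
  have hkey : (M ^ 2 - μ ^ 2) * (Y * Z ^ 2)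
      ≤ M * (M ^ 2 - μ ^ 2) * ly i0 / (μ ^ 3 * L) * (μ * (Y * Z)) ^ 2 :=
    rating_aux μ M L (ly i0) Y Z hμ hM hL hly1 hYpos hZpos hMμ hYlb
  calc |A i0 * S i - S i0 * A i| ≤ (M ^ 2 - μ ^ 2) * (Y * Z ^ 2) := hnum
    _ ≤ M * (M ^ 2 - μ ^ 2) * ly i0 / (μ ^ 3 * L) * (μ * (Y * Z)) ^ 2 := hkey
    _ ≤ M * (M ^ 2 - μ ^ 2) * ly i0 / (μ ^ 3 * L) * S i ^ 2 :=
        mul_le_mul_of_nonneg_left hSsq hR
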